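/- Let h : ℝⁿ → ℝ be twice continuously differentiable, f : ℝⁿ → ℝⁿ, G : ℝⁿ → ℝ^{n×m}, k_d : ℝⁿ → ℝᵐ locally Lipschitz, and α : ℝ → ℝ locally Lipschitz, strictly increasing with α(0) = 0. Let D ⊆ ℝⁿ be open with C = {x : h(x) ≥ 0} ⊆ D, and suppose that for every x ∈ D, either G(x)ᵀ∇h(x) ≠ 0 or ∇h(x)·f(x) > -α(h(x)). Define a(x) = α(h(x)) + ∇h(x)·f(x) + ∇h(x)·G(x)k_d(x), b(x) = ‖G(x)ᵀ∇h(x)‖², λ_QP(a,b) = 0 if b = 0 and max{0, -a/b} otherwise, and k_QP(x) = k_d(x) + λ_QP(a(x), b(x))·G(x)ᵀ∇h(x). Then for every T ∈ (0, ∞] and every differentiable curve x : [0, T) → D with x'(t) = f(x(t)) + G(x(t))k_QP(x(t)) for all t ∈ [0, T) and h(x(0)) ≥ 0, one has h(x(t)) ≥ 0 for all t ∈ [0, T). -/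

import Mathlib

open scoped RealInnerProductSpace ENNReal

/-- The piecewise gain of the closed-form CBF-QP controller. -/
noncomputable def lamQP (a b : ℝ) : ℝ := if b = 0 then 0 else max 0 (-a / b)

/-- Safety conclusion of the paper's Corollary 1 in Euclidean form: the closed-form
CBF-QP safety filter `k_QP` renders the zero-superlevel set `C = {h ≥ 0}` forward
invariant for the closed-loop system `ẋ = f(x) + G(x)·k_QP(x)`, along solutions
remaining in the open set `D ⊇ C` on which the CBF condition holds. -/
theorem stmt_16 (n m : ℕ)
    (h : EuclideanSpace ℝ (Fin n) → ℝ)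
    (f : EuclideanSpace ℝ (Fin n) → EuclideanSpace ℝ (Fin n))
    (G : EuclideanSpace ℝ (Fin n) →
      (EuclideanSpace ℝ (Fin m) →L[ℝ] EuclideanSpace ℝ (Fin n)))
    (kd : EuclideanSpace ℝ (Fin n) → EuclideanSpace ℝ (Fin m))
    (α : ℝ → ℝ)
    (hh : ContDiff ℝ 2 h) (hf : LocallyLipschitz f) (hG : LocallyLipschitz G)
    (hkd : LocallyLipschitz kd)
    (hα : LocallyLipschitz α) (hmono : StrictMono α) (hα0 : α 0 = 0)
    (C D : Set (EuclideanSpace ℝ (Fin n)))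
    (hC : C = {x | 0 ≤ h x})
    (hD : IsOpen D) (hCD : C ⊆ D)
    (hcbf : ∀ x ∈ D, ContinuousLinearMap.adjoint (G x) (gradient h x) ≠ 0 ∨
      ⟪gradient h x, f x⟫ > -α (h x))
    (a b : EuclideanSpace ℝ (Fin n) → ℝ)
    (ha : ∀ x, a x = α (h x) + ⟪gradient h x, f x⟫ + ⟪gradient h x, G x (kd x)⟫)
    (hb : ∀ x, b x = ‖ContinuousLinearMap.adjoint (G x) (gradient h x)‖ ^ 2)
    (kQP : EuclideanSpace ℝ (Fin n) → EuclideanSpace ℝ (Fin m))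
    (hkQP : ∀ x, kQP x =
      kd x + lamQP (a x) (b x) • ContinuousLinearMap.adjoint (G x) (gradient h x))
    (T : ℝ≥0∞) (hT : 0 < T)
    (x : ℝ → EuclideanSpace ℝ (Fin n))
    (hxD : ∀ t : ℝ, 0 ≤ t → ENNReal.ofReal t < T → x t ∈ D)
    (hx : ∀ t : ℝ, 0 ≤ t → ENNReal.ofReal t < T →
      HasDerivAt x (f (x t) + G (x t) (kQP (x t))) t)
    (hx0 : 0 ≤ h (x 0)) :
    ∀ t : ℝ, 0 ≤ t → ENNReal.ofReal t < T → 0 ≤ h (x t) := by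
  -- Pointwise barrier inequality on D
  have key : ∀ z ∈ D, -α (h z) ≤ ⟪gradient h z, f z + G z (kQP z)⟫ := by
    intro z hz
    set g := gradient h z with hg
    set v := ContinuousLinearMap.adjoint (G z) g with hv
    have hadj : ∀ u, ⟪g, G z u⟫ = ⟪v, u⟫ := fun u =>
      (ContinuousLinearMap.adjoint_inner_left (G z) u g).symm
    have hsum : ⟪g, f z + G z (kQP z)⟫
        = a z - α (h z) + lamQP (a z) (b z) * b z := by
      rw [inner_add_right, hkQP z, map_add, inner_add_right, hadj, hadj]
      have : ⟪v, lamQP (a z) (b z) • (ContinuousLinearMap.adjoint (G z)) (gradient h z)⟫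
          = lamQP (a z) (b z) * b z := by
        rw [inner_smul_right, hb z, ← hg, ← hv, real_inner_self_eq_norm_sq]
      rw [this, ha z, hadj]
      ring
    rw [hsum]
    have hgoal : 0 ≤ a z + lamQP (a z) (b z) * b z := by
      by_cases hbz : b z = 0
      · have hv0 : v = 0 := by
          have := hb z
          rw [← hv, hbz] at this
          have : ‖v‖ = 0 := by nlinarith [norm_nonneg v]
          simpa using this
        have hfin : ⟪g, f z⟫ > -α (h z) := by
          rcases hcbf z hz with h1 | h1
          · exact absurd hv0 h1
          · exact h1
        have hva : a z > 0 := by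
          have h2 : ⟪g, G z (kd z)⟫ = 0 := by rw [hadj, hv0, inner_zero_left]
          rw [ha z, h2]
          linarith
        simp only [lamQP, hbz, if_pos]
        linarith
      · have hbpos : 0 < b z := by
          rw [hb z]
          have : 0 ≤ ‖ContinuousLinearMap.adjoint (G z) (gradient h z)‖ ^ 2 :=
            sq_nonneg _
          rcases this.lt_or_eq with h' | h'
          · exact h'
          · exact absurd ((hb z).trans h'.symm) hbz
        have : lamQP (a z) (b z) * b z ≥ -a z := by
          simp only [lamQP, if_neg hbz]
          have h1 : (-a z / b z) * b z = -a z := div_mul_cancel₀ _ (ne_of_gt hbpos)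
          nlinarith [le_max_right (0:ℝ) (-a z / b z), hbpos]
        linarith
    linarith
  -- derivative of y = h ∘ x
  set y : ℝ → ℝ := fun t => h (x t) with hy
  have hdiffh : ∀ z, DifferentiableAt ℝ h z := fun z =>
    (hh.differentiable (by norm_num)).differentiableAt
  have hyderiv : ∀ t : ℝ, 0 ≤ t → ENNReal.ofReal t < T →
      HasDerivAt y ⟪gradient h (x t), f (x t) + G (x t) (kQP (x t))⟫ t := by
    intro t ht hlt
    have hgrad := (hdiffh (x t)).hasGradientAt
    have := hgrad.hasFDerivAt.comp_hasDerivAt t (hx t ht hlt)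
    simp at this ⊢
    exact this
  -- main argument
  intro t₁ ht₁ hTt₁
  by_contra hneg
  push_neg at hneg
  have hlt : ∀ t, 0 ≤ t → t ≤ t₁ → ENNReal.ofReal t < T := fun t _ htle =>
    lt_of_le_of_lt (ENNReal.ofReal_le_ofReal htle) hTt₁
  set S : Set ℝ := Set.Icc 0 t₁ ∩ y ⁻¹' Set.Ici 0 with hS
  have hycont : ContinuousOn y (Set.Icc 0 t₁) := by
    intro t ht
    exact ((hyderiv t ht.1 (hlt t ht.1 ht.2)).differentiableAt.continuousAt).continuousWithinAt
  have hSclosed : IsClosed S := by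
    exact hycont.preimage_isClosed_of_isClosed isClosed_Icc isClosed_Ici
  have hScompact : IsCompact S :=
    (isCompact_Icc (a := (0:ℝ)) (b := t₁)).of_isClosed_subset hSclosed
      Set.inter_subset_left
  have hSne : S.Nonempty := ⟨0, ⟨le_refl 0, ht₁⟩, hx0⟩
  set s := sSup S with hs
  have hsmem : s ∈ S := hScompact.sSup_mem hSne
  have hys : 0 ≤ y s := hsmem.2
  have hs0 : 0 ≤ s := hsmem.1.1
  have hst₁ : s ≤ t₁ := hsmem.1.2
  have hsne : s < t₁ := lt_of_le_of_ne hst₁ (fun e => by rw [e] at hys; linarith)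
  have hub : ∀ t ∈ S, t ≤ s := fun t ht => le_csSup hScompact.bddAbove ht
  have hylt : ∀ t, s < t → t ≤ t₁ → y t < 0 := by
    intro t hst htt₁
    by_contra hge
    push_neg at hge
    exact absurd (hub t ⟨⟨le_trans hs0 hst.le, htt₁⟩, hge⟩) (not_le.mpr hst)
  have hmonoy : StrictMonoOn y (Set.Icc s t₁) := by
    apply strictMonoOn_of_deriv_pos (convex_Icc s t₁)
    · exact hycont.mono (Set.Icc_subset_Icc hs0 le_rfl)
    · intro t ht
      rw [interior_Icc] at ht
      have ht0 : 0 ≤ t := le_trans hs0 ht.1.le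
      have hlt' := hlt t ht0 ht.2.le
      have hd := hyderiv t ht0 hlt'
      rw [hd.deriv]
      have hyneg : y t < 0 := hylt t ht.1 ht.2.le
      have hαneg : α (y t) < 0 := by
        have := hmono hyneg
        rwa [hα0] at this
      have := key (x t) (hxD t ht0 hlt')
      calc (0:ℝ) < -α (y t) := by linarith
        _ ≤ _ := this
  have := hmonoy (Set.left_mem_Icc.mpr hsne.le) (Set.right_mem_Icc.mpr hsne.le) hsne
  linarith
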